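/- arXiv:math/0111100 — 4 statements merged into one kernel-verified Lean document; each statement's English description precedes it below -/
import Mathlib

section
/- Let ψ be a wavelet for an irreducible unitary representation (ρ, H_ρ) of a locally compact Hausdorff group G. Then the wavelet transform W_ψ : H_ρ → L²(G), v ↦ (g ↦ (v | ρ(g)ψ)), is a continuous linear map that intertwines ρ with the left regular representation of G on L²(G): W_ψ(ρ(x)u)(y) = (W_ψ u)(x^{-1}y) for all x, y ∈ G and u ∈ H_ρ. -/
open MeasureTheory
open scoped InnerProductSpace ENNReal

noncomputable section

/-- A unitary representation `ρ` of `G` on `E` is irreducible if it has no proper nonzero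
closed invariant subspace. -/
def IsIrreducibleRep {G : Type*} [Group G] {E : Type*} [NormedAddCommGroup E]
    [InnerProductSpace ℂ E] (ρ : G →* (E ≃ₗᵢ[ℂ] E)) : Prop :=
  ∀ S : Submodule ℂ E, IsClosed (S : Set E) → (∀ g : G, ∀ v ∈ S, ρ g v ∈ S) →
    S = ⊥ ∨ S = ⊤

/-- Let `ψ` be a wavelet for an irreducible unitary representation `(ρ, H_ρ)` of a locally
compact Hausdorff group `G`, i.e. `ψ ≠ 0` and `g ↦ (v ∣ ρ(g)ψ)` is in `L²(G)` for every
`v`. Then the wavelet transform `W_ψ v (g) = (v ∣ ρ(g)ψ)` is a continuous linear map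
`H_ρ → L²(G)` intertwining `ρ` with the left regular representation:
`W_ψ(ρ(x)u)(y) = W_ψ u(x⁻¹ y)`.  (Here `(v ∣ w)` denotes the inner product, linear in
`v`, i.e. `⟪w, v⟫_ℂ` in Mathlib's convention.) -/
theorem wavelet_transform_is_continuous_intertwiner
    {G : Type*} [Group G] [TopologicalSpace G] [IsTopologicalGroup G]
    [LocallyCompactSpace G] [T2Space G] [MeasurableSpace G] [BorelSpace G]
    (μ : Measure G) [μ.IsHaarMeasure]
    {E : Type*} [NormedAddCommGroup E] [InnerProductSpace ℂ E] [CompleteSpace E]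
    (ρ : G →* (E ≃ₗᵢ[ℂ] E)) (hcont : ∀ v : E, Continuous fun g : G => ρ g v)
    (hirr : IsIrreducibleRep ρ)
    (ψ : E) (hψ0 : ψ ≠ 0)
    (hψ : ∀ v : E, MemLp (fun g : G => ⟪ρ g ψ, v⟫_ℂ) 2 μ) :
    -- `W_ψ` is linear
    (∀ (c : ℂ) (u v : E) (g : G),
      ⟪ρ g ψ, c • u + v⟫_ℂ = c * ⟪ρ g ψ, u⟫_ℂ + ⟪ρ g ψ, v⟫_ℂ) ∧
    -- `W_ψ` is continuous as a map into `L²(G)`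
    (∃ C : ℝ, 0 ≤ C ∧ ∀ u : E,
      eLpNorm (fun g : G => ⟪ρ g ψ, u⟫_ℂ) 2 μ ≤ ENNReal.ofReal (C * ‖u‖)) ∧
    -- `W_ψ` intertwines `ρ` with the left regular representation
    (∀ (x : G) (u : E) (y : G), ⟪ρ y ψ, ρ x u⟫_ℂ = ⟪ρ (x⁻¹ * y) ψ, u⟫_ℂ) := by
  haveI : Fact ((1:ℝ≥0∞) ≤ 2) := ⟨one_le_two⟩
  refine ⟨?_, ?_, ?_⟩
  · intro c u v g
    simp [inner_add_right, inner_smul_right]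
  · -- Continuity via the closed graph theorem
    let T : E →ₗ[ℂ] Lp ℂ 2 μ :=
      { toFun := fun v => (hψ v).toLp _
        map_add' := fun u v => by
          rw [MemLp.toLp_congr (hψ (u + v)) ((hψ u).add (hψ v))
            (Filter.Eventually.of_forall fun g => by simp [inner_add_right]),
            MemLp.toLp_add]
        map_smul' := fun c v => by
          rw [MemLp.toLp_congr (hψ (c • v)) ((hψ v).const_smul c)
            (Filter.Eventually.of_forall fun g => by simp [inner_smul_right]),
            MemLp.toLp_const_smul]
          rfl }
    have hT : Continuous T := by
      apply LinearMap.continuous_of_seq_closed_graph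
      intro u x y hu hTu
      have hconv : Filter.Tendsto (fun n => eLpNorm (⇑(T (u n)) - ⇑y) 2 μ)
          Filter.atTop (nhds 0) :=
        (Lp.tendsto_Lp_iff_tendsto_eLpNorm' (fun n => T (u n)) y).mp hTu
      have hmeas : TendstoInMeasure μ (fun n => ⇑(T (u n))) Filter.atTop ⇑y :=
        tendstoInMeasure_of_tendsto_eLpNorm (by norm_num)
          (fun n => Lp.aestronglyMeasurable _) (Lp.aestronglyMeasurable _) hconv
      obtain ⟨ns, hns, hae⟩ := hmeas.exists_seq_tendsto_ae
      have hcoe : ∀ᵐ g ∂μ, ∀ n : ℕ, (T (u n) : G → ℂ) g = ⟪ρ g ψ, u n⟫_ℂ :=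
        MeasureTheory.ae_all_iff.mpr fun n => MemLp.coeFn_toLp (hψ (u n))
      have key : ⇑y =ᵐ[μ] fun g : G => ⟪ρ g ψ, x⟫_ℂ := by
        filter_upwards [hae, hcoe] with g hg hc
        have h1 : Filter.Tendsto (fun i => ⟪ρ g ψ, u (ns i)⟫_ℂ) Filter.atTop (nhds (y g)) := by
          simpa only [hc] using hg
        have h2 : Filter.Tendsto (fun i => ⟪ρ g ψ, u (ns i)⟫_ℂ) Filter.atTop
            (nhds ⟪ρ g ψ, x⟫_ℂ) := by
          exact ((continuous_inner.comp (continuous_const.prodMk continuous_id)).tendsto x).comp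
            (hu.comp hns.tendsto_atTop)
        exact tendsto_nhds_unique h1 h2
      exact Lp.ext (key.trans (MemLp.coeFn_toLp (hψ x)).symm)
    let T' : E →L[ℂ] Lp ℂ 2 μ := ⟨T, hT⟩
    refine ⟨‖T'‖, norm_nonneg _, fun u => ?_⟩
    have h1 : eLpNorm (fun g : G => ⟪ρ g ψ, u⟫_ℂ) 2 μ = ENNReal.ofReal ‖T' u‖ := by
      rw [show (T' u : Lp ℂ 2 μ) = (hψ u).toLp _ from rfl, Lp.norm_toLp,
        ENNReal.ofReal_toReal (hψ u).2.ne]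
    rw [h1]
    exact ENNReal.ofReal_le_ofReal (T'.le_opNorm u)
  · intro x u y
    have h1 : ρ (x⁻¹ * y) ψ = (ρ x).symm (ρ y ψ) := by
      have h2 : ρ x (ρ (x⁻¹ * y) ψ) = ρ y ψ := by
        have : ρ x * ρ (x⁻¹ * y) = ρ y := by rw [← map_mul]; group
        calc ρ x (ρ (x⁻¹ * y) ψ) = (ρ x * ρ (x⁻¹ * y)) ψ := rfl
          _ = ρ y ψ := by rw [this]
      rw [← h2, LinearIsometryEquiv.symm_apply_apply]
    rw [h1, ← LinearIsometryEquiv.inner_map_map (ρ x) ((ρ x).symm (ρ y ψ)) u,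
      LinearIsometryEquiv.apply_symm_apply]
end
end

section
/- Let (ρ, H_ρ) and (τ, H_τ) be irreducible unitary representations of a locally compact Hausdorff group G with wavelets ψ and η respectively. (a) If ρ and τ are not unitarily equivalent, then (W_ψ u | W_η v)_{L²(G)} = 0 for all u ∈ H_ρ and v ∈ H_τ; in particular the images of W_ψ and W_η are orthogonal subspaces of L²(G). (b) If τ = ρ (same representation on the same space), there exists a complex constant C_{ψ,η} such that (W_ψ u | W_η v)_{L²(G)} = C_{ψ,η} (u | v) for all u, v ∈ H_ρ, and C_{ψ,ψ} > 0. -/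
open MeasureTheory
open scoped InnerProductSpace ENNReal

noncomputable section

/-- `ψ` is a wavelet for the unitary representation `ρ`: a nonzero vector all of whose
matrix coefficients `g ↦ (v ∣ ρ(g)ψ) = ⟪ρ(g)ψ, v⟫` are square integrable. -/
def IsWaveletFor {G : Type*} [Group G] [MeasurableSpace G] (μ : Measure G)
    {E : Type*} [NormedAddCommGroup E] [InnerProductSpace ℂ E]
    (ρ : G →* (E ≃ₗᵢ[ℂ] E)) (ψ : E) : Prop :=
  ψ ≠ 0 ∧ ∀ v : E, MemLp (fun g : G => ⟪ρ g ψ, v⟫_ℂ) 2 μ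

open ContinuousLinearMap Filter
open scoped Topology

section Schur

variable {G : Type*} [Group G] {E : Type*} [NormedAddCommGroup E] [InnerProductSpace ℂ E]
  [CompleteSpace E]

/-- conjugation by a unitary, as a star algebra homomorphism on bounded operators -/
def conjSAH (U : E ≃ₗᵢ[ℂ] E) : (E →L[ℂ] E) →⋆ₐ[ℂ] (E →L[ℂ] E) where
  toFun B := (U : E →L[ℂ] E) ∘L B ∘L (U.symm : E →L[ℂ] E)
  map_one' := by ext v; simp
  map_mul' B C := by ext v; simp
  map_zero' := by ext v; simp
  map_add' B C := by ext v; simp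
  commutes' c := by ext v; simp
  map_star' B := by
    simp only [star_eq_adjoint, ← comp_assoc, adjoint_comp]
    simp [comp_assoc]
    congr 1
    ext v
    apply ext_inner_right ℂ
    intro w
    rw [adjoint_inner_left]
    simp [LinearIsometryEquiv.inner_map_eq_flip]

lemma conjSAH_continuous (U : E ≃ₗᵢ[ℂ] E) : Continuous (conjSAH U) := by
  show Continuous fun B : E →L[ℂ] E => (U : E →L[ℂ] E) ∘L B ∘L (U.symm : E →L[ℂ] E)
  exact continuous_const.clm_comp (continuous_id.clm_comp continuous_const)

lemma commute_cfc (U : E ≃ₗᵢ[ℂ] E) (A : E →L[ℂ] E) (hA : IsSelfAdjoint A)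
    (h : (U : E →L[ℂ] E) ∘L A = A ∘L (U : E →L[ℂ] E)) (f : ℝ → ℝ) (hf : Continuous f) :
    (U : E →L[ℂ] E) ∘L cfc f A = cfc f A ∘L (U : E →L[ℂ] E) := by
  haveI : CompactSpace (spectrum ℝ A) :=
    isCompact_iff_compactSpace.mp (ContinuousFunctionalCalculus.isCompact_spectrum A)
  have hfix : conjSAH U A = A := by
    show (U : E →L[ℂ] E) ∘L A ∘L (U.symm : E →L[ℂ] E) = A
    rw [← comp_assoc, h]
    ext v; simp
  have hsa : IsSelfAdjoint (conjSAH U A) := hfix.symm ▸ hA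
  have key : conjSAH U (cfc f A) = cfc f (conjSAH U A) :=
    StarAlgHom.map_cfc (conjSAH U) f A hf.continuousOn (conjSAH_continuous U) hA hsa
  rw [hfix] at key
  calc (U : E →L[ℂ] E) ∘L cfc f A
      = ((U : E →L[ℂ] E) ∘L cfc f A ∘L (U.symm : E →L[ℂ] E)) ∘L (U : E →L[ℂ] E) := by
        ext v; simp
    _ = cfc f A ∘L (U : E →L[ℂ] E) := by
        rw [show (U : E →L[ℂ] E) ∘L cfc f A ∘L (U.symm : E →L[ℂ] E) = cfc f A from key]

lemma ker_bot_of_commutes (ρ : G →* (E ≃ₗᵢ[ℂ] E)) (hρirr : IsIrreducibleRep ρ)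
    (B : E →L[ℂ] E) (hcomm : ∀ g, ((ρ g : E →L[ℂ] E)) ∘L B = B ∘L (ρ g : E →L[ℂ] E))
    (hB : B ≠ 0) : ∀ v, B v = 0 → v = 0 := by
  have hinv : ∀ g : G, ∀ v ∈ LinearMap.ker (B : E →ₗ[ℂ] E), ρ g v ∈ LinearMap.ker (B : E →ₗ[ℂ] E) := by
    intro g v hv
    have := congrFun (congrArg (fun T : E →L[ℂ] E => (T : E → E)) (hcomm g)) v
    simp only [coe_comp', Function.comp_apply] at this
    simp only [LinearMap.mem_ker] at hv ⊢
    show B ((ρ g : E →L[ℂ] E) v) = 0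
    rw [← this]
    show (ρ g : E →L[ℂ] E) (B v) = 0
    rw [show B v = 0 from hv]
    exact map_zero _
  rcases hρirr (LinearMap.ker (B : E →ₗ[ℂ] E)) (isClosed_ker B) hinv with h | h
  · intro v hv
    have : v ∈ LinearMap.ker (B : E →ₗ[ℂ] E) := hv
    rw [h] at this
    simpa using this
  · exfalso
    apply hB
    ext v
    have : v ∈ LinearMap.ker (B : E →ₗ[ℂ] E) := by rw [h]; trivial
    simpa using this

lemma schur_selfAdjoint [Nontrivial E] (ρ : G →* (E ≃ₗᵢ[ℂ] E)) (hρirr : IsIrreducibleRep ρ)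
    (A : E →L[ℂ] E) (hA : IsSelfAdjoint A)
    (hcomm : ∀ g, ((ρ g : E →L[ℂ] E)) ∘L A = A ∘L (ρ g : E →L[ℂ] E)) :
    ∃ c : ℝ, A = algebraMap ℝ (E →L[ℂ] E) c := by
  haveI : Nontrivial (E →L[ℂ] E) := ⟨1, 0, fun h => by
    obtain ⟨v, hv⟩ := exists_ne (0 : E)
    exact hv (by simpa using congrFun (congrArg (fun T : E →L[ℂ] E => (T : E → E)) h) v)⟩
  -- spectrum is a singleton
  have hsub : (spectrum ℝ A).Subsingleton := by
    intro s hs t ht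
    by_contra hst
    set d := dist s t with hd
    have hd0 : 0 < d := dist_pos.mpr hst
    set f : ℝ → ℝ := fun x => max (1 - (2 / d) * dist x s) 0 with hfdef
    set k : ℝ → ℝ := fun x => max (1 - (2 / d) * dist x t) 0 with hkdef
    have hfc : Continuous f := ((continuous_const.sub
      (continuous_const.mul (continuous_id.dist continuous_const))).max continuous_const)
    have hkc : Continuous k := ((continuous_const.sub
      (continuous_const.mul (continuous_id.dist continuous_const))).max continuous_const)
    have hprod : ∀ x, f x * k x = 0 := by
      intro x
      rcases le_or_gt (d / 2) (dist x s) with hx | hx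
      · have : f x = 0 := by
          have : 1 - (2 / d) * dist x s ≤ 0 := by
            have : (2 / d) * (d / 2) ≤ (2 / d) * dist x s :=
              mul_le_mul_of_nonneg_left hx (by positivity)
            have h1 : (2 / d) * (d / 2) = 1 := by field_simp
            linarith
          simp [hfdef, max_eq_right this]
        rw [this, zero_mul]
      · have hxt : d / 2 ≤ dist x t := by
          have := dist_triangle s x t
          have hxs : dist s x = dist x s := dist_comm s x
          linarith
        have : k x = 0 := by
          have : 1 - (2 / d) * dist x t ≤ 0 := by
            have : (2 / d) * (d / 2) ≤ (2 / d) * dist x t :=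
              mul_le_mul_of_nonneg_left hxt (by positivity)
            have h1 : (2 / d) * (d / 2) = 1 := by field_simp
            linarith
          simp [hkdef, max_eq_right this]
        rw [this, mul_zero]
    have hfs : f s = 1 := by simp [hfdef]
    have hkt : k t = 1 := by simp [hkdef]
    -- the two cfc operators
    have hPQ : cfc f A * cfc k A = 0 := by
      rw [← cfc_mul f k A hfc.continuousOn hkc.continuousOn]
      calc cfc (fun x => f x * k x) A = cfc (0 : ℝ → ℝ) A := by
            apply cfc_congr; intro x _; exact hprod x
        _ = 0 := cfc_zero ℝ A
    have hne : ∀ (h : ℝ → ℝ), Continuous h → ∀ x ∈ spectrum ℝ A, h x = 1 → cfc h A ≠ 0 := by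
      intro h hc x hx hx1 h0
      have := cfc_map_spectrum (R := ℝ) (f := h) (a := A) hA hc.continuousOn
      rw [h0, CFC.spectrum_zero_eq] at this
      have : h x ∈ ({0} : Set ℝ) := this ▸ Set.mem_image_of_mem h hx
      rw [hx1] at this
      simp at this
    have hPne := hne f hfc s hs hfs
    have hQne := hne k hkc t ht hkt
    -- both commute with ρ g
    have hPcomm := fun g => commute_cfc (ρ g) A hA (hcomm g) f hfc
    obtain ⟨v, hv⟩ : ∃ v, cfc k A v ≠ 0 := by
      by_contra hc
      push_neg at hc
      exact hQne (by ext v; simpa using hc v)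
    have : cfc f A (cfc k A v) = 0 := by
      have := congrFun (congrArg (fun T : E →L[ℂ] E => (T : E → E)) hPQ) v
      simpa [ContinuousLinearMap.mul_apply] using this
    exact hv (ker_bot_of_commutes ρ hρirr (cfc f A) hPcomm hPne _ this)
  obtain ⟨c, hc⟩ := hA.spectrum_nonempty
  have hspec : spectrum ℝ A = {c} := by
    apply Set.eq_singleton_iff_unique_mem.mpr ⟨hc, fun x hx => hsub hx hc⟩
  refine ⟨c, ?_⟩
  calc A = cfc (id : ℝ → ℝ) A := (cfc_id ℝ A hA).symm
    _ = cfc (fun _ => c : ℝ → ℝ) A := by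
        apply cfc_congr; intro x hx; rw [hspec] at hx; simpa using hx
    _ = algebraMap ℝ (E →L[ℂ] E) c := cfc_const c A hA

end Schur

section Schur2

variable {G : Type*} [Group G] {E : Type*} [NormedAddCommGroup E] [InnerProductSpace ℂ E]
  [CompleteSpace E]

omit [CompleteSpace E] in
lemma rho_mul_apply (ρ : G →* (E ≃ₗᵢ[ℂ] E)) (g h : G) (v : E) :
    ρ g (ρ h v) = ρ (g * h) v := by rw [map_mul]; rfl

omit [CompleteSpace E] in
lemma rho_inv_apply (ρ : G →* (E ≃ₗᵢ[ℂ] E)) (g : G) (v : E) :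
    ρ g (ρ g⁻¹ v) = v := by
  rw [rho_mul_apply, mul_inv_cancel, map_one]; rfl

omit [CompleteSpace E] in
lemma rho_inv_apply' (ρ : G →* (E ≃ₗᵢ[ℂ] E)) (g : G) (v : E) :
    ρ g⁻¹ (ρ g v) = v := by
  rw [rho_mul_apply, inv_mul_cancel, map_one]; rfl

lemma adjoint_commutes (ρ : G →* (E ≃ₗᵢ[ℂ] E)) (T : E →L[ℂ] E)
    (hpt : ∀ (g : G) (v : E), ρ g (T v) = T (ρ g v)) :
    ∀ (g : G) (v : E), ρ g (adjoint T v) = adjoint T (ρ g v) := by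
  intro g v
  apply ext_inner_right ℂ
  intro u
  calc ⟪ρ g (adjoint T v), u⟫_ℂ
      = ⟪ρ g⁻¹ (ρ g (adjoint T v)), ρ g⁻¹ u⟫_ℂ := ((ρ g⁻¹).inner_map_map _ _).symm
    _ = ⟪adjoint T v, ρ g⁻¹ u⟫_ℂ := by rw [rho_inv_apply']
    _ = ⟪v, T (ρ g⁻¹ u)⟫_ℂ := by rw [adjoint_inner_left]
    _ = ⟪v, ρ g⁻¹ (T u)⟫_ℂ := by rw [hpt g⁻¹ u]
    _ = ⟪ρ g v, ρ g (ρ g⁻¹ (T u))⟫_ℂ := ((ρ g).inner_map_map _ _).symm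
    _ = ⟪ρ g v, T u⟫_ℂ := by rw [rho_inv_apply]
    _ = ⟪adjoint T (ρ g v), u⟫_ℂ := by rw [adjoint_inner_left]

/-- Schur's lemma: a bounded operator commuting with an irreducible unitary representation
is a scalar. -/
lemma schur_general [Nontrivial E] (ρ : G →* (E ≃ₗᵢ[ℂ] E)) (hρirr : IsIrreducibleRep ρ)
    (T : E →L[ℂ] E) (hpt : ∀ (g : G) (v : E), ρ g (T v) = T (ρ g v)) :
    ∃ c : ℂ, ∀ v, T v = c • v := by
  have hptA := adjoint_commutes ρ T hpt
  set A : E →L[ℂ] E := T + adjoint T with hAdef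
  set B : E →L[ℂ] E := Complex.I • (T - adjoint T) with hBdef
  have hA : IsSelfAdjoint A := by
    rw [IsSelfAdjoint, star_eq_adjoint, hAdef, map_add, adjoint_adjoint, add_comm]
  have hB : IsSelfAdjoint B := by
    rw [IsSelfAdjoint, hBdef, star_smul, star_eq_adjoint, map_sub, adjoint_adjoint]
    simp only [Complex.star_def, Complex.conj_I, neg_smul, smul_sub]
    abel
  have hcommA : ∀ g, ((ρ g : E →L[ℂ] E)) ∘L A = A ∘L (ρ g : E →L[ℂ] E) := by
    intro g; ext v
    show ρ g (A v) = A (ρ g v)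
    have h2 : A (ρ g v) = T (ρ g v) + adjoint T (ρ g v) := rfl
    have h1 : A v = T v + adjoint T v := rfl
    rw [h1, h2, map_add, hpt, hptA]
  have hcommB : ∀ g, ((ρ g : E →L[ℂ] E)) ∘L B = B ∘L (ρ g : E →L[ℂ] E) := by
    intro g; ext v
    show ρ g (B v) = B (ρ g v)
    have h1 : B v = Complex.I • (T v - adjoint T v) := rfl
    have h2 : B (ρ g v) = Complex.I • (T (ρ g v) - adjoint T (ρ g v)) := rfl
    rw [h1, h2, _root_.map_smul, map_sub, hpt, hptA]
  obtain ⟨a, ha⟩ := schur_selfAdjoint ρ hρirr A hA hcommA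
  obtain ⟨b, hb⟩ := schur_selfAdjoint ρ hρirr B hB hcommB
  refine ⟨(a - Complex.I * b) / 2, fun v => ?_⟩
  have halg : ∀ (r : ℝ) (w : E), algebraMap ℝ (E →L[ℂ] E) r w = (r : ℂ) • w := by
    intro r w
    rw [Algebra.algebraMap_eq_smul_one]
    show r • w = (r : ℂ) • w
    rw [← algebraMap_smul ℂ r w]
    norm_num
  have h1 : T v + adjoint T v = (a : ℂ) • v := by rw [← halg]; exact DFunLike.congr_fun ha v
  have h2 : Complex.I • (T v - adjoint T v) = (b : ℂ) • v := by
    rw [← halg]; exact DFunLike.congr_fun hb v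
  have h3 : T v - adjoint T v = -((Complex.I * (b : ℂ)) • v) := by
    have h4 := congrArg (fun w => (-Complex.I) • w) h2
    simp only [smul_smul, neg_mul, Complex.I_mul_I, neg_neg, one_smul, neg_smul] at h4
    exact h4
  have key : (2 : ℂ) • T v = ((a : ℂ) - Complex.I * b) • v := by
    calc (2 : ℂ) • T v = (T v + adjoint T v) + (T v - adjoint T v) := by module
      _ = (a : ℂ) • v + -((Complex.I * (b : ℂ)) • v) := by rw [h1, h3]
      _ = ((a : ℂ) - Complex.I * b) • v := by module
  have : T v = ((2 : ℂ)⁻¹ * ((a : ℂ) - Complex.I * b)) • v := by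
    rw [← smul_smul, ← key, smul_smul]
    norm_num
  rw [this]
  congr 1
  ring

end Schur2

section Wavelet

variable {G : Type*} [Group G] [MeasurableSpace G]
  {E : Type*} [NormedAddCommGroup E] [InnerProductSpace ℂ E] [CompleteSpace E]
  (μ : Measure G)

/-- The wavelet transform as a linear map into L². -/
def waveletLM (ρ : G →* (E ≃ₗᵢ[ℂ] E)) (ψ : E)
    (hψ : ∀ v : E, MemLp (fun g : G => ⟪ρ g ψ, v⟫_ℂ) 2 μ) :
    E →ₗ[ℂ] Lp ℂ 2 μ where
  toFun v := (hψ v).toLp _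
  map_add' u v := by
    rw [← MemLp.toLp_add (hψ u) (hψ v)]
    refine MemLp.toLp_congr _ _ ?_
    filter_upwards with g
    simp [inner_add_right]
  map_smul' c v := by
    show MemLp.toLp _ (hψ (c • v)) = c • MemLp.toLp _ (hψ v)
    rw [← MemLp.toLp_const_smul c (hψ v)]
    refine MemLp.toLp_congr _ _ ?_
    filter_upwards with g
    simp [inner_smul_right]

lemma waveletLM_coeFn (ρ : G →* (E ≃ₗᵢ[ℂ] E)) (ψ : E)
    (hψ : ∀ v : E, MemLp (fun g : G => ⟪ρ g ψ, v⟫_ℂ) 2 μ) (v : E) :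
    ⇑(waveletLM μ ρ ψ hψ v) =ᵐ[μ] fun g => ⟪ρ g ψ, v⟫_ℂ :=
  (hψ v).coeFn_toLp

lemma waveletLM_continuous (ρ : G →* (E ≃ₗᵢ[ℂ] E)) (ψ : E)
    (hψ : ∀ v : E, MemLp (fun g : G => ⟪ρ g ψ, v⟫_ℂ) 2 μ) :
    Continuous (waveletLM μ ρ ψ hψ) := by
  apply LinearMap.continuous_of_seq_closed_graph
  intro u x y hu hWu
  have hsnorm : Tendsto
      (fun n => eLpNorm ((fun g => ⟪ρ g ψ, u n⟫_ℂ) - ⇑y) 2 μ) atTop (𝓝 0) := by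
    have := (Lp.tendsto_Lp_iff_tendsto_eLpNorm' (fun n => waveletLM μ ρ ψ hψ (u n)) y).mp hWu
    refine this.congr fun n => ?_
    exact eLpNorm_congr_ae ((waveletLM_coeFn μ ρ ψ hψ (u n)).sub (EventuallyEq.rfl (f := ⇑y)))
  have hmeas : TendstoInMeasure μ (fun n g => ⟪ρ g ψ, u n⟫_ℂ) atTop ⇑y :=
    tendstoInMeasure_of_tendsto_eLpNorm two_ne_zero
      (fun n => (hψ (u n)).aestronglyMeasurable) (Lp.aestronglyMeasurable y) hsnorm
  obtain ⟨ns, hns, hae⟩ := hmeas.exists_seq_tendsto_ae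
  have hpt : ∀ g : G, Tendsto (fun n => ⟪ρ g ψ, u n⟫_ℂ) atTop (𝓝 ⟪ρ g ψ, x⟫_ℂ) :=
    fun g => tendsto_const_nhds.inner hu
  have hyx : ⇑y =ᵐ[μ] fun g => ⟪ρ g ψ, x⟫_ℂ := by
    filter_upwards [hae] with g hg
    exact tendsto_nhds_unique hg ((hpt g).comp hns.tendsto_atTop)
  exact Lp.ext (hyx.trans (waveletLM_coeFn μ ρ ψ hψ x).symm)

/-- The wavelet transform as a continuous linear map into L². -/
def waveletCLM (ρ : G →* (E ≃ₗᵢ[ℂ] E)) (ψ : E)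
    (hψ : ∀ v : E, MemLp (fun g : G => ⟪ρ g ψ, v⟫_ℂ) 2 μ) :
    E →L[ℂ] Lp ℂ 2 μ :=
  ⟨waveletLM μ ρ ψ hψ, waveletLM_continuous μ ρ ψ hψ⟩

lemma waveletCLM_coeFn (ρ : G →* (E ≃ₗᵢ[ℂ] E)) (ψ : E)
    (hψ : ∀ v : E, MemLp (fun g : G => ⟪ρ g ψ, v⟫_ℂ) 2 μ) (v : E) :
    ⇑(waveletCLM μ ρ ψ hψ v) =ᵐ[μ] fun g => ⟪ρ g ψ, v⟫_ℂ :=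
  (hψ v).coeFn_toLp

end Wavelet

section Pairing

variable {G : Type*} [Group G] [MeasurableSpace G]
  {E : Type*} [NormedAddCommGroup E] [InnerProductSpace ℂ E] [CompleteSpace E]
  {F : Type*} [NormedAddCommGroup F] [InnerProductSpace ℂ F] [CompleteSpace F]
  {μ : Measure G}

lemma wavelet_pair_eq_integral (ρ : G →* (E ≃ₗᵢ[ℂ] E)) (ψ : E)
    (hψ : ∀ v : E, MemLp (fun g : G => ⟪ρ g ψ, v⟫_ℂ) 2 μ)
    (τ : G →* (F ≃ₗᵢ[ℂ] F)) (η : F)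
    (hη : ∀ v : F, MemLp (fun g : G => ⟪τ g η, v⟫_ℂ) 2 μ)
    (u : E) (v : F) :
    ⟪waveletCLM μ τ η hη v, waveletCLM μ ρ ψ hψ u⟫_ℂ
      = ∫ g, ⟪ρ g ψ, u⟫_ℂ * (starRingEnd ℂ) ⟪τ g η, v⟫_ℂ ∂μ := by
  rw [L2.inner_def]
  apply integral_congr_ae
  filter_upwards [waveletCLM_coeFn μ ρ ψ hψ u, waveletCLM_coeFn μ τ η hη v] with g h1 h2
  rw [RCLike.inner_apply, h1, h2]

lemma wavelet_invariance [MeasurableMul G] [μ.IsMulLeftInvariant]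
    (ρ : G →* (E ≃ₗᵢ[ℂ] E)) (ψ : E) (τ : G →* (F ≃ₗᵢ[ℂ] F)) (η : F)
    (h : G) (u : E) (v : F) :
    ∫ g, ⟪ρ g ψ, ρ h u⟫_ℂ * (starRingEnd ℂ) ⟪τ g η, τ h v⟫_ℂ ∂μ
      = ∫ g, ⟪ρ g ψ, u⟫_ℂ * (starRingEnd ℂ) ⟪τ g η, v⟫_ℂ ∂μ := by
  calc ∫ g, ⟪ρ g ψ, ρ h u⟫_ℂ * (starRingEnd ℂ) ⟪τ g η, τ h v⟫_ℂ ∂μ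
      = ∫ g, ⟪ρ (h⁻¹ * g) ψ, u⟫_ℂ * (starRingEnd ℂ) ⟪τ (h⁻¹ * g) η, v⟫_ℂ ∂μ := by
        apply integral_congr_ae
        filter_upwards with g
        have e1 : ⟪ρ g ψ, ρ h u⟫_ℂ = ⟪ρ (h⁻¹ * g) ψ, u⟫_ℂ := by
          calc ⟪ρ g ψ, ρ h u⟫_ℂ
              = ⟪ρ h⁻¹ (ρ g ψ), ρ h⁻¹ (ρ h u)⟫_ℂ := ((ρ h⁻¹).inner_map_map _ _).symm
            _ = ⟪ρ (h⁻¹ * g) ψ, u⟫_ℂ := by rw [rho_mul_apply, rho_inv_apply']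
        have e2 : ⟪τ g η, τ h v⟫_ℂ = ⟪τ (h⁻¹ * g) η, v⟫_ℂ := by
          calc ⟪τ g η, τ h v⟫_ℂ
              = ⟪τ h⁻¹ (τ g η), τ h⁻¹ (τ h v)⟫_ℂ := ((τ h⁻¹).inner_map_map _ _).symm
            _ = ⟪τ (h⁻¹ * g) η, v⟫_ℂ := by rw [rho_mul_apply, rho_inv_apply']
        rw [e1, e2]
    _ = ∫ g, ⟪ρ g ψ, u⟫_ℂ * (starRingEnd ℂ) ⟪τ g η, v⟫_ℂ ∂μ :=
        integral_mul_left_eq_self (fun g => ⟪ρ g ψ, u⟫_ℂ * (starRingEnd ℂ) ⟪τ g η, v⟫_ℂ) h⁻¹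

/-- The canonical intertwining operator `W_ψ* ∘ W_η` between two wavelet representations. -/
lemma wavelet_intertwiner [MeasurableMul G] [μ.IsMulLeftInvariant]
    (ρ : G →* (E ≃ₗᵢ[ℂ] E)) (ψ : E)
    (hψ : ∀ v : E, MemLp (fun g : G => ⟪ρ g ψ, v⟫_ℂ) 2 μ)
    (τ : G →* (F ≃ₗᵢ[ℂ] F)) (η : F)
    (hη : ∀ v : F, MemLp (fun g : G => ⟪τ g η, v⟫_ℂ) 2 μ) :
    ∃ T : F →L[ℂ] E,
      (∀ (v : F) (u : E),
        ⟪T v, u⟫_ℂ = ∫ g, ⟪ρ g ψ, u⟫_ℂ * (starRingEnd ℂ) ⟪τ g η, v⟫_ℂ ∂μ) ∧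
      (∀ (h : G) (v : F), T (τ h v) = ρ h (T v)) := by
  refine ⟨adjoint (waveletCLM μ ρ ψ hψ) ∘L waveletCLM μ τ η hη, fun v u => ?_, fun h v => ?_⟩
  · calc ⟪(adjoint (waveletCLM μ ρ ψ hψ) ∘L waveletCLM μ τ η hη) v, u⟫_ℂ
        = ⟪waveletCLM μ τ η hη v, waveletCLM μ ρ ψ hψ u⟫_ℂ := by
          rw [comp_apply, adjoint_inner_left]
      _ = _ := wavelet_pair_eq_integral ρ ψ hψ τ η hη u v
  · set T := adjoint (waveletCLM μ ρ ψ hψ) ∘L waveletCLM μ τ η hη with hT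
    have hTinner : ∀ (v : F) (u : E),
        ⟪T v, u⟫_ℂ = ∫ g, ⟪ρ g ψ, u⟫_ℂ * (starRingEnd ℂ) ⟪τ g η, v⟫_ℂ ∂μ := by
      intro v u
      rw [hT, comp_apply, adjoint_inner_left]
      exact wavelet_pair_eq_integral ρ ψ hψ τ η hη u v
    apply ext_inner_right ℂ
    intro u
    calc ⟪T (τ h v), u⟫_ℂ
        = ∫ g, ⟪ρ g ψ, u⟫_ℂ * (starRingEnd ℂ) ⟪τ g η, τ h v⟫_ℂ ∂μ := hTinner _ _
      _ = ∫ g, ⟪ρ g ψ, ρ h (ρ h⁻¹ u)⟫_ℂ * (starRingEnd ℂ) ⟪τ g η, τ h v⟫_ℂ ∂μ := by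
          rw [rho_inv_apply]
      _ = ∫ g, ⟪ρ g ψ, ρ h⁻¹ u⟫_ℂ * (starRingEnd ℂ) ⟪τ g η, v⟫_ℂ ∂μ :=
          wavelet_invariance ρ ψ τ η h (ρ h⁻¹ u) v
      _ = ⟪T v, ρ h⁻¹ u⟫_ℂ := (hTinner _ _).symm
      _ = ⟪ρ h (T v), ρ h (ρ h⁻¹ u)⟫_ℂ := ((ρ h).inner_map_map _ _).symm
      _ = ⟪ρ h (T v), u⟫_ℂ := by rw [rho_inv_apply]

lemma adjoint_intertwines (ρ : G →* (E ≃ₗᵢ[ℂ] E)) (τ : G →* (F ≃ₗᵢ[ℂ] F)) (T : F →L[ℂ] E)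
    (hT : ∀ (h : G) (v : F), T (τ h v) = ρ h (T v)) :
    ∀ (h : G) (w : E), adjoint T (ρ h w) = τ h (adjoint T w) := by
  intro h w
  apply ext_inner_right ℂ
  intro v
  calc ⟪adjoint T (ρ h w), v⟫_ℂ
      = ⟪ρ h w, T v⟫_ℂ := by rw [adjoint_inner_left]
    _ = ⟪ρ h⁻¹ (ρ h w), ρ h⁻¹ (T v)⟫_ℂ := ((ρ h⁻¹).inner_map_map _ _).symm
    _ = ⟪w, T (τ h⁻¹ v)⟫_ℂ := by rw [rho_inv_apply', hT]
    _ = ⟪adjoint T w, τ h⁻¹ v⟫_ℂ := by rw [adjoint_inner_left]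
    _ = ⟪τ h (adjoint T w), τ h (τ h⁻¹ v)⟫_ℂ := ((τ h).inner_map_map _ _).symm
    _ = ⟪τ h (adjoint T w), v⟫_ℂ := by rw [rho_inv_apply]

end Pairing

lemma inner_self_ofReal {E : Type*} [NormedAddCommGroup E] [InnerProductSpace ℂ E] (x : E) :
    ⟪x, x⟫_ℂ = ((‖x‖^2 : ℝ) : ℂ) := by
  rw [inner_self_eq_norm_sq_to_K]; norm_cast

lemma mul_conj_self (z : ℂ) : z * (starRingEnd ℂ) z = ((‖z‖^2 : ℝ) : ℂ) := by
  rw [Complex.mul_conj]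
  norm_cast
  rw [Complex.normSq_eq_norm_sq]

/-- Orthogonality relations for wavelet transforms.
(a) If `ρ` and `τ` are irreducible unitary representations with wavelets `ψ`, `η` and
they are not unitarily equivalent, then `(W_ψ u ∣ W_η v)_{L²(G)} = 0` for all `u, v`;
in particular the images of `W_ψ` and `W_η` are orthogonal in `L²(G)`.
(b) If the two representations coincide (wavelets `ψ`, `η'` for the same `ρ`), there
is a constant `C_{ψ,η'} ∈ ℂ` with `(W_ψ u ∣ W_{η'} v) = C_{ψ,η'} (u ∣ v)` for all
`u, v`; and `C_{ψ,ψ} > 0`.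
(Paper inner products `(u ∣ w)` are `⟪w, u⟫_ℂ`; `(W_ψ u ∣ W_η v)_{L²(G)}
= ∫ W_ψu(g) conj(W_ηv(g)) dμ(g)`.) -/
theorem wavelet_orthogonality_relations
    {G : Type*} [Group G] [TopologicalSpace G] [IsTopologicalGroup G]
    [LocallyCompactSpace G] [T2Space G] [MeasurableSpace G] [BorelSpace G]
    (μ : Measure G) [μ.IsHaarMeasure]
    {E : Type*} [NormedAddCommGroup E] [InnerProductSpace ℂ E] [CompleteSpace E]
    {F : Type*} [NormedAddCommGroup F] [InnerProductSpace ℂ F] [CompleteSpace F]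
    (ρ : G →* (E ≃ₗᵢ[ℂ] E)) (hρcont : ∀ v : E, Continuous fun g : G => ρ g v)
    (hρirr : IsIrreducibleRep ρ)
    (τ : G →* (F ≃ₗᵢ[ℂ] F)) (hτcont : ∀ v : F, Continuous fun g : G => τ g v)
    (hτirr : IsIrreducibleRep τ)
    (ψ : E) (hψ : IsWaveletFor μ ρ ψ)
    (η : F) (hη : IsWaveletFor μ τ η) :
    -- (a) inequivalent representations give orthogonal wavelet transforms
    ((¬ ∃ U : E ≃ₗᵢ[ℂ] F, ∀ (g : G) (v : E), U (ρ g v) = τ g (U v)) →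
      ∀ (u : E) (v : F),
        ∫ g : G, ⟪ρ g ψ, u⟫_ℂ * (starRingEnd ℂ) ⟪τ g η, v⟫_ℂ ∂μ = 0) ∧
    -- (b) for a single representation there is a constant `C_{ψ,η'}` …
    (∀ η' : E, IsWaveletFor μ ρ η' →
      ∃ C : ℂ, ∀ u v : E,
        ∫ g : G, ⟪ρ g ψ, u⟫_ℂ * (starRingEnd ℂ) ⟪ρ g η', v⟫_ℂ ∂μ = C * ⟪v, u⟫_ℂ) ∧
    -- … and `C_{ψ,ψ} > 0`
    (∃ C : ℝ, 0 < C ∧ ∀ u v : E,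
      ∫ g : G, ⟪ρ g ψ, u⟫_ℂ * (starRingEnd ℂ) ⟪ρ g ψ, v⟫_ℂ ∂μ = (C : ℂ) * ⟪v, u⟫_ℂ) := by
  obtain ⟨hψ0, hψ2⟩ := hψ
  obtain ⟨hη0, hη2⟩ := hη
  haveI : Nontrivial E := nontrivial_of_ne ψ 0 hψ0
  haveI : Nontrivial F := nontrivial_of_ne η 0 hη0
  have partb : ∀ η' : E, IsWaveletFor μ ρ η' →
      ∃ C : ℂ, ∀ u v : E,
        ∫ g : G, ⟪ρ g ψ, u⟫_ℂ * (starRingEnd ℂ) ⟪ρ g η', v⟫_ℂ ∂μ = C * ⟪v, u⟫_ℂ := by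
    intro η' hη'
    obtain ⟨T, hTinner, hTint⟩ := wavelet_intertwiner ρ ψ hψ2 ρ η' hη'.2
    obtain ⟨c, hc⟩ := schur_general ρ hρirr T (fun g v => (hTint g v).symm)
    refine ⟨(starRingEnd ℂ) c, fun u v => ?_⟩
    rw [← hTinner v u, hc v, inner_smul_left]
  refine ⟨?_, partb, ?_⟩
  · -- part (a)
    intro hnoU u v
    by_contra hne
    obtain ⟨T, hTinner, hTint⟩ := wavelet_intertwiner ρ ψ hψ2 τ η hη2
    have hT0 : T ≠ 0 := by
      intro h0
      apply hne
      rw [← hTinner v u, h0]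
      simp
    obtain ⟨v₀, hv₀⟩ : ∃ v₀ : F, T v₀ ≠ 0 := by
      by_contra hcon; push_neg at hcon
      exact hT0 (by ext w; simpa using hcon w)
    have hadjint := adjoint_intertwines ρ τ T hTint
    set S : F →L[ℂ] F := ContinuousLinearMap.adjoint T ∘L T with hS
    have hScomm : ∀ (g : G) (w : F), τ g (S w) = S (τ g w) := by
      intro g w
      rw [hS, comp_apply, comp_apply, hTint, hadjint]
    obtain ⟨c, hc⟩ := schur_general τ hτirr S (fun g w => hScomm g w)
    have hSinner : ∀ w : F, ⟪S w, w⟫_ℂ = ((‖T w‖^2 : ℝ) : ℂ) := by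
      intro w
      rw [hS, comp_apply, adjoint_inner_left, inner_self_ofReal]
    have hv₀0 : v₀ ≠ 0 := by rintro rfl; simp at hv₀
    have hnv₀ : (0:ℝ) < ‖v₀‖ := norm_pos_iff.mpr hv₀0
    have hnTv₀ : (0:ℝ) < ‖T v₀‖ := norm_pos_iff.mpr hv₀
    set r : ℝ := ‖T v₀‖^2 / ‖v₀‖^2 with hr
    have hrpos : 0 < r := by positivity
    have hccr : (starRingEnd ℂ) c = (r : ℂ) := by
      have h1 := hSinner v₀
      rw [hc v₀, inner_smul_left, inner_self_ofReal] at h1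
      have hne2 : ((‖v₀‖^2 : ℝ) : ℂ) ≠ 0 := by
        norm_cast
        positivity
      rw [hr]
      have hne2' : ((‖v₀‖ : ℂ))^2 ≠ 0 := by norm_cast; positivity
      push_cast at h1 ⊢
      rw [eq_div_iff hne2']
      linear_combination h1
    have hTnorm : ∀ w : F, ‖T w‖^2 = r * ‖w‖^2 := by
      intro w
      have h1 := hSinner w
      rw [hc w, inner_smul_left, inner_self_ofReal, hccr] at h1
      have h2 : ((‖T w‖^2 : ℝ) : ℂ) = ((r * ‖w‖^2 : ℝ) : ℂ) := by
        push_cast at h1 ⊢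
        linear_combination -h1
      exact_mod_cast h2
    set s : ℝ := Real.sqrt r with hsdef
    have hs : 0 < s := Real.sqrt_pos.mpr hrpos
    have hTnorm' : ∀ w : F, ‖T w‖ = s * ‖w‖ := by
      intro w
      have h2 : ‖T w‖^2 = (s * ‖w‖)^2 := by
        rw [mul_pow, hsdef, Real.sq_sqrt hrpos.le, hTnorm]
      have h₁ : (0:ℝ) ≤ ‖T w‖ := norm_nonneg _
      have h₂ : (0:ℝ) ≤ s * ‖w‖ := by positivity
      nlinarith [h2, h₁, h₂]
    set T' : F →L[ℂ] E := ((s⁻¹ : ℝ) : ℂ) • T with hT'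
    have hT'app : ∀ w, T' w = ((s⁻¹ : ℝ) : ℂ) • T w := fun w => rfl
    have hT'norm : ∀ w, ‖T' w‖ = ‖w‖ := by
      intro w
      rw [hT'app, norm_smul, hTnorm' w]
      simp only [Complex.norm_real, Real.norm_eq_abs, abs_of_pos (inv_pos.mpr hs)]
      field_simp
    have hT'int : ∀ (g : G) (w : F), T' (τ g w) = ρ g (T' w) := by
      intro g w
      rw [hT'app, hT'app, hTint, _root_.map_smul]
    set L : F →ₗᵢ[ℂ] E := ⟨T'.toLinearMap, hT'norm⟩ with hL
    have hLcoe : ∀ w, L w = T' w := fun w => rfl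
    have hrange : (LinearMap.range (T' : F →ₗ[ℂ] E) : Set E) = Set.range ⇑L := by
      ext x
      constructor
      · rintro ⟨w, rfl⟩; exact ⟨w, rfl⟩
      · rintro ⟨w, rfl⟩; exact ⟨w, rfl⟩
    have hclosed : IsClosed (LinearMap.range (T' : F →ₗ[ℂ] E) : Set E) := by
      rw [hrange]
      exact L.isometry.isClosedEmbedding.isClosed_range
    have hinvr : ∀ g : G, ∀ x ∈ LinearMap.range (T' : F →ₗ[ℂ] E),
        ρ g x ∈ LinearMap.range (T' : F →ₗ[ℂ] E) := by
      rintro g x ⟨w, rfl⟩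
      exact ⟨τ g w, hT'int g w⟩
    have hsur : Function.Surjective ⇑L := by
      rcases hρirr (LinearMap.range (T' : F →ₗ[ℂ] E)) hclosed hinvr with h | h
      · exfalso
        have hmem : T' v₀ ∈ LinearMap.range (T' : F →ₗ[ℂ] E) := ⟨v₀, rfl⟩
        rw [h] at hmem
        have : T' v₀ = 0 := by simpa using hmem
        rw [hT'app] at this
        have hs0 : ((s⁻¹ : ℝ) : ℂ) ≠ 0 := by
          norm_cast
          positivity
        rcases smul_eq_zero.mp this with h' | h'
        · exact hs0 h'
        · exact hv₀ h'
      · intro x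
        have hx : x ∈ LinearMap.range (T' : F →ₗ[ℂ] E) := by rw [h]; trivial
        obtain ⟨w, hw⟩ := hx
        exact ⟨w, hw⟩
    set e : F ≃ₗᵢ[ℂ] E := LinearIsometryEquiv.ofSurjective L hsur with he
    have hecoe : ∀ w, e w = T' w := fun w => rfl
    refine hnoU ⟨e.symm, fun g x => ?_⟩
    apply e.injective
    rw [e.apply_symm_apply]
    calc ρ g x = ρ g (e (e.symm x)) := by rw [e.apply_symm_apply]
      _ = ρ g (T' (e.symm x)) := by rw [hecoe]
      _ = T' (τ g (e.symm x)) := (hT'int g _).symm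
      _ = e (τ g (e.symm x)) := (hecoe _).symm
  · -- part (c)
    obtain ⟨C, hC⟩ := partb ψ ⟨hψ0, hψ2⟩
    have hcont : Continuous fun g : G => ⟪ρ g ψ, ψ⟫_ℂ := (hρcont ψ).inner continuous_const
    set r : ℝ := ∫ g, ‖⟪ρ g ψ, ψ⟫_ℂ‖^2 ∂μ with hrdef
    have hint : Integrable (fun g => ‖⟪ρ g ψ, ψ⟫_ℂ‖^2) μ := by
      have h2 := (hψ2 ψ).integrable_norm_rpow (by norm_num) (by norm_num)
      simpa [ENNReal.toReal_ofNat, Real.rpow_natCast] using h2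
    have hrpos : 0 < r := by
      rw [hrdef, integral_pos_iff_support_of_nonneg (fun g => by positivity) hint]
      have hU : IsOpen {g : G | ⟪ρ g ψ, ψ⟫_ℂ ≠ 0} :=
        IsOpen.preimage hcont isOpen_compl_singleton
      have h1mem : (1 : G) ∈ {g : G | ⟪ρ g ψ, ψ⟫_ℂ ≠ 0} := by
        show ⟪ρ 1 ψ, ψ⟫_ℂ ≠ 0
        rw [map_one ρ]
        show ⟪ψ, ψ⟫_ℂ ≠ 0
        rw [inner_self_ne_zero]
        exact hψ0
      calc 0 < μ {g : G | ⟪ρ g ψ, ψ⟫_ℂ ≠ 0} := hU.measure_pos μ ⟨1, h1mem⟩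
        _ ≤ μ (Function.support fun g => ‖⟪ρ g ψ, ψ⟫_ℂ‖^2) := by
            apply measure_mono
            intro g hg
            simp only [Function.mem_support]
            intro hzero
            apply hg
            have : ‖⟪ρ g ψ, ψ⟫_ℂ‖ = 0 := by
              nlinarith [norm_nonneg ⟪ρ g ψ, ψ⟫_ℂ, hzero]
            simpa using this
    have heval' : ∫ g, ((‖⟪ρ g ψ, ψ⟫_ℂ‖^2 : ℝ) : ℂ) ∂μ = (r : ℂ) := by
      rw [hrdef]
      exact integral_ofReal
    have heval : ∫ g, ⟪ρ g ψ, ψ⟫_ℂ * (starRingEnd ℂ) ⟪ρ g ψ, ψ⟫_ℂ ∂μ = (r : ℂ) := by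
      rw [← heval']
      apply integral_congr_ae
      filter_upwards with g
      exact mul_conj_self _
    have hCψ := hC ψ ψ
    rw [heval, inner_self_ofReal] at hCψ
    have hψn : (0:ℝ) < ‖ψ‖ := norm_pos_iff.mpr hψ0
    refine ⟨r / ‖ψ‖^2, by positivity, fun u v => ?_⟩
    rw [hC u v]
    congr 1
    have hne2 : ((‖ψ‖^2 : ℝ) : ℂ) ≠ 0 := by
      norm_cast
      positivity
    have hne2' : ((‖ψ‖ : ℂ))^2 ≠ 0 := by norm_cast; positivity
    push_cast at hCψ ⊢
    rw [eq_div_iff hne2']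
    linear_combination -hCψ
end
end

section
/- Let ψ be a wavelet for an irreducible unitary representation (ρ, H_ρ) of a locally compact Hausdorff group G, and let f ∈ L²(G). Then the operator ρ(f) applied to ψ is weakly defined, i.e. there is a vector w ∈ H_ρ with (w | u) = ∫_G f(x)(ρ(x)ψ | u) dx for all u ∈ H_ρ, and the adjoint of the wavelet transform satisfies W_ψ* f = w. -/
open MeasureTheory
open scoped InnerProductSpace ENNReal

noncomputable section

/-- Let `ψ` be a wavelet for an irreducible unitary representation `(ρ, H_ρ)` of a
locally compact Hausdorff group `G`, and let `W : H_ρ → L²(G)` be the associated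
wavelet transform, `W u = [g ↦ (u ∣ ρ(g)ψ)]`.  For `f ∈ L²(G)` the operator value
`ρ(f)ψ` is weakly defined — there is `w ∈ H_ρ` with
`(w ∣ u) = ∫ f(x) (ρ(x)ψ ∣ u) dx` for all `u` — and `W* f = ρ(f)ψ = w`.
(Paper inner products `(u ∣ w)` are `⟪w, u⟫_ℂ` in Mathlib's convention.) -/
theorem wavelet_transform_adjoint
    {G : Type*} [Group G] [TopologicalSpace G] [IsTopologicalGroup G]
    [LocallyCompactSpace G] [T2Space G] [MeasurableSpace G] [BorelSpace G]
    (μ : Measure G) [μ.IsHaarMeasure]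
    {E : Type*} [NormedAddCommGroup E] [InnerProductSpace ℂ E] [CompleteSpace E]
    (ρ : G →* (E ≃ₗᵢ[ℂ] E)) (hcont : ∀ v : E, Continuous fun g : G => ρ g v)
    (hirr : IsIrreducibleRep ρ)
    (ψ : E) (hψ0 : ψ ≠ 0)
    (hψ : ∀ v : E, MemLp (fun g : G => ⟪ρ g ψ, v⟫_ℂ) 2 μ)
    (W : E →L[ℂ] Lp ℂ 2 μ)
    (hW : ∀ u : E, (W u : G → ℂ) =ᵐ[μ] fun g : G => ⟪ρ g ψ, u⟫_ℂ) :
    ∀ f : Lp ℂ 2 μ, ∃ w : E,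
      (∀ u : E, ⟪u, w⟫_ℂ = ∫ x : G, (f : G → ℂ) x * ⟪u, ρ x ψ⟫_ℂ ∂μ) ∧
      ContinuousLinearMap.adjoint W f = w := by
  intro f
  refine ⟨ContinuousLinearMap.adjoint W f, fun u => ?_, rfl⟩
  rw [ContinuousLinearMap.adjoint_inner_right, MeasureTheory.L2.inner_def]
  refine integral_congr_ae ?_
  filter_upwards [hW u] with x hx
  simp only [RCLike.inner_apply, hx]
  rw [← inner_conj_symm (ρ x ψ) u]
  simp [RCLike.inner_apply, mul_comm]
end
end

section
/- Let ψ be a wavelet for an irreducible unitary representation (ρ, H_ρ) of a locally compact Hausdorff group G. Then the image Im(W_ψ) is a closed subspace of L²(G) consisting of (equivalence classes of) continuous functions, it is a reproducing Hilbert space (point evaluations on Im(W_ψ) are continuous), and with c_ψ = C_{ψ,ψ}^{-1/2} the map U_ψ : u ↦ c_ψ W_ψ u is a unitary isomorphism of H_ρ onto Im(W_ψ). -/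
open MeasureTheory
open scoped InnerProductSpace ENNReal

noncomputable section

/-- Let `ψ` be a wavelet for an irreducible unitary representation `(ρ, H_ρ)` of a
locally compact Hausdorff group `G`, `W : H_ρ → L²(G)` the wavelet transform
`W u = [g ↦ (u ∣ ρ(g)ψ)]` and `C = C_{ψ,ψ} > 0` the constant with
`(W u ∣ W v) = C (u ∣ v)`.  Then `Im W` is a closed subspace of `L²(G)` consisting of
(classes of) continuous functions, point evaluations on `Im W` are continuous (so
`Im W` is a reproducing Hilbert space), and `U_ψ = C^{-1/2} W` is a unitary
isomorphism of `H_ρ` onto `Im W` (i.e. `‖W u‖ = √C ‖u‖` for all `u`). -/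
theorem wavelet_transform_image_reproducing
    {G : Type*} [Group G] [TopologicalSpace G] [IsTopologicalGroup G]
    [LocallyCompactSpace G] [T2Space G] [MeasurableSpace G] [BorelSpace G]
    (μ : Measure G) [μ.IsHaarMeasure]
    {E : Type*} [NormedAddCommGroup E] [InnerProductSpace ℂ E] [CompleteSpace E]
    (ρ : G →* (E ≃ₗᵢ[ℂ] E)) (hcont : ∀ v : E, Continuous fun g : G => ρ g v)
    (hirr : IsIrreducibleRep ρ)
    (ψ : E) (hψ0 : ψ ≠ 0)
    (hψ : ∀ v : E, MemLp (fun g : G => ⟪ρ g ψ, v⟫_ℂ) 2 μ)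
    (W : E →L[ℂ] Lp ℂ 2 μ)
    (hW : ∀ u : E, (W u : G → ℂ) =ᵐ[μ] fun g : G => ⟪ρ g ψ, u⟫_ℂ)
    (C : ℝ) (hC0 : 0 < C)
    (hC : ∀ u v : E, ⟪W u, W v⟫_ℂ = (C : ℂ) * ⟪u, v⟫_ℂ) :
    -- `Im W` is closed in `L²(G)`
    IsClosed (Set.range W) ∧
    -- every element of `Im W` has a continuous representative,
    -- namely the matrix coefficient itself
    (∀ u : E, (Continuous fun g : G => ⟪ρ g ψ, u⟫_ℂ) ∧
      (W u : G → ℂ) =ᵐ[μ] fun g : G => ⟪ρ g ψ, u⟫_ℂ) ∧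
    -- point evaluations (on the continuous representatives) are continuous on `Im W`
    (∀ g : G, ∃ c : ℝ, ∀ u : E, ‖⟪ρ g ψ, u⟫_ℂ‖ ≤ c * ‖W u‖) ∧
    -- `U_ψ = C^{-1/2} W` is a unitary isomorphism onto `Im W`
    (∀ u : E, ‖W u‖ = Real.sqrt C * ‖u‖) := by
  have hnorm : ∀ u : E, ‖W u‖ = Real.sqrt C * ‖u‖ := by
    intro u
    have h := hC u u
    rw [inner_self_eq_norm_sq_to_K, inner_self_eq_norm_sq_to_K] at h
    have h' : (‖W u‖ ^ 2 : ℝ) = C * ‖u‖ ^ 2 := by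
      have h3 : ((‖W u‖ ^ 2 : ℝ) : ℂ) = ((C * ‖u‖ ^ 2 : ℝ) : ℂ) := by push_cast; exact h
      exact_mod_cast h3
    have h2 : ‖W u‖ = Real.sqrt (C * ‖u‖ ^ 2) := by
      rw [← h']; exact (Real.sqrt_sq (norm_nonneg _)).symm
    rw [h2, Real.sqrt_mul hC0.le, Real.sqrt_sq (norm_nonneg _)]
  have hsq : 0 < Real.sqrt C := Real.sqrt_pos.2 hC0
  refine ⟨?_, fun u => ⟨?_, hW u⟩, fun g => ⟨‖ψ‖ / Real.sqrt C, fun u => ?_⟩, hnorm⟩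
  · have hanti : AntilipschitzWith ⟨(Real.sqrt C)⁻¹, by positivity⟩ W := by
      refine AntilipschitzWith.of_le_mul_dist fun x y => ?_
      have : dist (W x) (W y) = Real.sqrt C * dist x y := by
        rw [dist_eq_norm, dist_eq_norm, ← map_sub, hnorm]
      rw [this]
      change dist x y ≤ (Real.sqrt C)⁻¹ * (Real.sqrt C * dist x y)
      rw [← mul_assoc, inv_mul_cancel₀ hsq.ne', one_mul]
    exact hanti.isClosed_range W.uniformContinuous
  · exact Continuous.inner (hcont ψ) continuous_const
  · have h1 : ‖⟪ρ g ψ, u⟫_ℂ‖ ≤ ‖ψ‖ * ‖u‖ := by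
      calc ‖⟪ρ g ψ, u⟫_ℂ‖ ≤ ‖(ρ g) ψ‖ * ‖u‖ := norm_inner_le_norm _ _
      _ = ‖ψ‖ * ‖u‖ := by rw [(ρ g).norm_map]
    have h2 : ‖u‖ = ‖W u‖ / Real.sqrt C := by
      rw [hnorm u]; field_simp
    rw [h2] at h1
    calc ‖⟪ρ g ψ, u⟫_ℂ‖ ≤ ‖ψ‖ * (‖W u‖ / Real.sqrt C) := h1
    _ = ‖ψ‖ / Real.sqrt C * ‖W u‖ := by ring
end
end
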